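/- Let X and Y be geometric data sets and π ∈ Π(μ_X, μ_Y) a coupling. Then there exists a map u : F̄_X → F̄_Y such that for every f ∈ F̄_X, d_KF^π(f ∘ pr₁, u(f) ∘ pr₂) ≤ d_conc^π(X,Y), where d_conc^π(X,Y) := H_{d_KF^π}(F_X ∘ pr₁, F_Y ∘ pr₂). In other words, for each f in the closure of F_X, the Hausdorff-distance bound is attained by some element of the closure of F_Y. -/

import Mathlib

open MeasureTheory Topology Filter ENNReal

noncomputable section

/-- The Ky Fan (extended) pseudometric between two maps, w.r.t. a measure `π`:
`inf {ε ≥ 0 | π {ω | d (u ω) (v ω) > ε} ≤ ε}`. -/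
def kyFan {Ω E : Type*} [MeasurableSpace Ω] [PseudoEMetricSpace E]
    (π : Measure Ω) (u v : Ω → E) : ℝ≥0∞ :=
  sInf {ε : ℝ≥0∞ | π {ω | ε < edist (u ω) (v ω)} ≤ ε}

/-- Hausdorff distance between two sets w.r.t. an abstract extended pseudometric `d`. -/
def hausd {α : Type*} (d : α → α → ℝ≥0∞) (A B : Set α) : ℝ≥0∞ :=
  max (⨆ a : A, ⨅ b : B, d a b) (⨆ b : B, ⨅ a : A, d a b)

/-- The sup (extended) pseudometric `d∞^A` over a subset `A`. -/
def dInfty {α β : Type*} [PseudoEMetricSpace β] (A : Set α) (u v : α → β) : ℝ≥0∞ :=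
  ⨆ a : A, edist (u a) (v a)

/-- A geometric data set: a complete separable metric space whose distance is the
supremum of feature differences over a nonempty family `F` of real-valued functions,
equipped with a fully supported Borel probability measure. -/
structure GDS where
  carrier : Type
  met : MetricSpace carrier
  cms : CompleteSpace carrier
  sep : TopologicalSpace.SeparableSpace carrier
  msp : MeasurableSpace carrier
  bor : BorelSpace carrier
  F : Set (carrier → ℝ)
  F_nonempty : F.Nonempty
  dist_isLUB : ∀ x y : carrier, IsLUB ((fun f => |f x - f y|) '' F) (dist x y)
  μ : Measure carrier
  prob : IsProbabilityMeasure μ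
  full_support : ∀ U : Set carrier, IsOpen U → U.Nonempty → 0 < μ U

attribute [instance] GDS.met GDS.cms GDS.sep GDS.msp GDS.bor GDS.prob

/-- A coupling of the measures of two geometric data sets. -/
def GDS.Coupling (X Y : GDS) (π : Measure (X.carrier × Y.carrier)) : Prop :=
  IsProbabilityMeasure π ∧ π.map Prod.fst = X.μ ∧ π.map Prod.snd = Y.μ

/-- A parameter of a measure `μ`: a Borel measurable map from `[0,1]` (with Lebesgue
measure) pushing the Lebesgue measure forward to `μ`. -/
def IsParam {X : Type*} [MeasurableSpace X] (μ : Measure X)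
    (φ : Set.Icc (0:ℝ) 1 → X) : Prop :=
  Measurable φ ∧ Measure.map φ volume = μ

/-- The observable distance between two geometric data sets. -/
def dConc (X Y : GDS) : ℝ≥0∞ :=
  ⨅ (φ : Set.Icc (0:ℝ) 1 → X.carrier) (_ : IsParam X.μ φ)
    (ψ : Set.Icc (0:ℝ) 1 → Y.carrier) (_ : IsParam Y.μ ψ),
    hausd (kyFan (volume : Measure (Set.Icc (0:ℝ) 1)))
      ((· ∘ φ) '' X.F) ((· ∘ ψ) '' Y.F)

/-- `d_conc^π`, the Hausdorff distance w.r.t. the Ky Fan metric of a coupling `π`. -/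
def dConcCoupling (X Y : GDS) (π : Measure (X.carrier × Y.carrier)) : ℝ≥0∞ :=
  hausd (kyFan π) ((· ∘ Prod.fst) '' X.F) ((· ∘ Prod.snd) '' Y.F)

/-- The Prohorov distance between two Borel measures. -/
def prohorov {Z : Type*} [PseudoEMetricSpace Z] [MeasurableSpace Z]
    (μ ν : Measure Z) : ℝ≥0∞ :=
  sInf {ε : ℝ≥0∞ | ∀ A : Set Z, MeasurableSet A →
    ν A ≤ μ {z | EMetric.infEdist z A < ε} + ε}

/-- The `a`-partial diameter of a Borel measure on `ℝ`. -/
def partialDiam (ν : Measure ℝ) (a : ℝ≥0∞) : ℝ≥0∞ :=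
  ⨅ (I : Set ℝ) (_ : MeasurableSet I) (_ : a ≤ ν I), EMetric.diam I

/-- The `κ`-observable diameter `ObsDiam(X; -κ)` of a geometric data set. -/
def obsDiam (X : GDS) (κ : ℝ) : ℝ≥0∞ :=
  ⨆ f : X.F, partialDiam (X.μ.map f) (ENNReal.ofReal (1 - κ))

/-- The distortion of a subset `S ⊆ X × Y`. -/
def distortion {X Y : Type*} [PseudoMetricSpace X] [PseudoMetricSpace Y]
    (S : Set (X × Y)) : ℝ≥0∞ :=
  ⨆ (p : S) (q : S), edist (dist p.1.1 q.1.1) (dist p.1.2 q.1.2)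

/-- `□_π^S(F, G) = max {1 - π S, 2 H_{d∞^S}(F ∘ pr₁, G ∘ pr₂)}`. -/
def boxS (X Y : GDS) (π : Measure (X.carrier × Y.carrier))
    (S : Set (X.carrier × Y.carrier))
    (F : Set (X.carrier → ℝ)) (G : Set (Y.carrier → ℝ)) : ℝ≥0∞ :=
  max (1 - π S) (2 * hausd (dInfty S) ((· ∘ Prod.fst) '' F) ((· ∘ Prod.snd) '' G))

/-- `□_π(F, G)`, infimum of `□_π^S(F, G)` over closed `S`. -/
def boxCoupling (X Y : GDS) (π : Measure (X.carrier × Y.carrier))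
    (F : Set (X.carrier → ℝ)) (G : Set (Y.carrier → ℝ)) : ℝ≥0∞ :=
  ⨅ (S : Set (X.carrier × Y.carrier)) (_ : IsClosed S), boxS X Y π S F G

/-- The box distance between two geometric data sets. -/
def boxDist (X Y : GDS) : ℝ≥0∞ :=
  ⨅ (π : Measure (X.carrier × Y.carrier)) (_ : X.Coupling Y π),
    boxCoupling X Y π X.F Y.F

/-- The distortion `dis π` of a coupling `π`. -/
def disCoupling (X Y : GDS) (π : Measure (X.carrier × Y.carrier)) : ℝ≥0∞ :=
  ⨅ (S : Set (X.carrier × Y.carrier)) (_ : IsClosed S), max (1 - π S) (distortion S)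

/-- `X ⪯ Y` : the geometric data set `Y` dominates `X` (feature order). -/
def GDS.Dominates (Y X : GDS) : Prop :=
  ∃ p : Y.carrier → X.carrier, Measurable p ∧ Y.μ.map p = X.μ ∧
    (· ∘ p) '' X.F ⊆ closure Y.F


section AuxLemmas

variable {Ω E : Type*} [MeasurableSpace Ω] [PseudoEMetricSpace E] (π : Measure Ω)

lemma kyFan_le' {u v : Ω → E} {t : ℝ≥0∞} (h : π {ω | t < edist (u ω) (v ω)} ≤ t) :
    kyFan π u v ≤ t := sInf_le h

lemma kyFan_le_one' [IsProbabilityMeasure π] (u v : Ω → E) : kyFan π u v ≤ 1 :=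
  kyFan_le' π (le_trans (measure_mono (Set.subset_univ _)) (by simp))

lemma measure_kyFan_lt' (u v : Ω → E) :
    π {ω | kyFan π u v < edist (u ω) (v ω)} ≤ kyFan π u v := by
  set S := {ε : ℝ≥0∞ | π {ω | ε < edist (u ω) (v ω)} ≤ ε} with hS
  by_cases htop : sInf S = ⊤
  · rw [kyFan, htop]; exact le_top
  have hSne : S.Nonempty := by
    by_contra h
    rw [Set.not_nonempty_iff_eq_empty] at h
    rw [h, sInf_empty] at htop
    exact htop rfl
  obtain ⟨ε, hanti, htend, hmem⟩ := exists_seq_tendsto_sInf hSne (OrderBot.bddBelow S)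
  have hset : {ω | sInf S < edist (u ω) (v ω)} = ⋃ n, {ω | ε n < edist (u ω) (v ω)} := by
    ext ω
    simp only [Set.mem_setOf_eq, Set.mem_iUnion]
    constructor
    · intro h
      exact (htend.eventually_lt_const h).exists
    · rintro ⟨n, hn⟩
      exact lt_of_le_of_lt (sInf_le (hmem n)) hn
  have hmono : Monotone (fun n => {ω | ε n < edist (u ω) (v ω)}) := by
    intro m n hmn ω hω
    exact lt_of_le_of_lt (hanti hmn) hω
  rw [kyFan, hset, Directed.measure_iUnion (hmono.directed_le)]
  refine iSup_le fun m => ?_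
  refine ge_of_tendsto htend (eventually_atTop.mpr ⟨m, fun n hn => ?_⟩)
  exact le_trans (measure_mono (hmono hn)) (hmem n)

lemma measure_lt_of_kyFan_le' {u v : Ω → E} {t : ℝ≥0∞} (h : kyFan π u v ≤ t) :
    π {ω | t < edist (u ω) (v ω)} ≤ t := by
  refine le_trans (le_trans (measure_mono ?_) (measure_kyFan_lt' π u v)) h
  intro ω hω
  exact lt_of_le_of_lt h hω

lemma kyFan_triangle' (u v w : Ω → E) :
    kyFan π u w ≤ kyFan π u v + kyFan π v w := by
  refine kyFan_le' π ?_
  have hsub : {ω | kyFan π u v + kyFan π v w < edist (u ω) (w ω)} ⊆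
      {ω | kyFan π u v < edist (u ω) (v ω)} ∪ {ω | kyFan π v w < edist (v ω) (w ω)} := by
    intro ω hω
    by_contra hc
    simp only [Set.mem_union, Set.mem_setOf_eq, not_or, not_lt] at hc
    exact absurd (le_trans (edist_triangle (u ω) (v ω) (w ω)) (add_le_add hc.1 hc.2))
      (not_le.mpr hω)
  exact le_trans (le_trans (measure_mono hsub) (measure_union_le _ _))
    (add_le_add (measure_kyFan_lt' π u v) (measure_kyFan_lt' π v w))

end AuxLemmas

lemma tight_aux {α : Type*} [MetricSpace α] [CompleteSpace α]
    [TopologicalSpace.SeparableSpace α] [MeasurableSpace α] [BorelSpace α]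
    (μ : Measure α) [IsProbabilityMeasure μ] {ε : ℝ≥0∞} (hε : ε ≠ 0) :
    ∃ K : Set α, IsCompact K ∧ μ Kᶜ ≤ ε := by
  rcases isEmpty_or_nonempty α with hA | hA
  · exact ⟨∅, isCompact_empty, by simp [Set.eq_empty_of_isEmpty (∅ : Set α)ᶜ]⟩
  obtain ⟨e, he⟩ := TopologicalSpace.exists_dense_seq α
  set δ : ℕ → ℝ≥0∞ := fun n => ε * 2⁻¹ ^ (n + 1) with hδ
  have hδ0 : ∀ n, δ n ≠ 0 := fun n => by
    simp [hδ, hε, pow_ne_zero, ENNReal.inv_ne_zero]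
  have key : ∀ n : ℕ, ∃ m : ℕ,
      1 - δ n < μ (⋃ i ∈ Finset.range (m + 1), Metric.closedBall (e i) (1 / (n + 1))) := by
    intro n
    have hcov : (⋃ m : ℕ, ⋃ i ∈ Finset.range (m + 1), Metric.closedBall (e i) (1 / (n + 1)))
        = Set.univ := by
      refine Set.eq_univ_of_forall fun x => ?_
      obtain ⟨i, hi⟩ := Metric.denseRange_iff.mp he x (1 / (n + 1)) (by positivity)
      refine Set.mem_iUnion.mpr ⟨i, ?_⟩
      exact Set.mem_iUnion.mpr ⟨i, Set.mem_iUnion.mpr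
        ⟨Finset.self_mem_range_succ i, Metric.mem_closedBall.mpr hi.le⟩⟩
    have hmono : Monotone (fun m : ℕ =>
        ⋃ i ∈ Finset.range (m + 1), Metric.closedBall (e i) (1 / (n + 1))) := by
      intro a b hab
      exact Set.biUnion_subset_biUnion_left (fun i hi => Finset.mem_range.mpr
        (lt_of_lt_of_le (Finset.mem_range.mp hi) (by omega)))
    have heq := Directed.measure_iUnion (μ := μ) hmono.directed_le
    rw [hcov, measure_univ] at heq
    have hlt : 1 - δ n < ⨆ m : ℕ, μ (⋃ i ∈ Finset.range (m + 1),
        Metric.closedBall (e i) (1 / (n + 1))) := by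
      rw [← heq]
      exact ENNReal.sub_lt_self one_ne_top one_ne_zero (hδ0 n)
    exact lt_iSup_iff.mp hlt
  choose m hm using key
  set B : ℕ → Set α := fun n => ⋃ i ∈ Finset.range (m n + 1),
    Metric.closedBall (e i) (1 / (n + 1)) with hB
  have hBclosed : ∀ n, IsClosed (B n) := fun n =>
    Set.Finite.isClosed_biUnion (Finset.range (m n + 1)).finite_toSet
      (fun i _ => Metric.isClosed_closedBall)
  refine ⟨⋂ n, B n, ?_, ?_⟩
  · refine TotallyBounded.isCompact_of_isClosed ?_ (isClosed_iInter hBclosed)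
    refine Metric.totallyBounded_iff.mpr fun r hr => ?_
    obtain ⟨n, hn⟩ := exists_nat_one_div_lt hr
    refine ⟨e '' (Finset.range (m n + 1) : Set ℕ), (Set.toFinite _).image e, ?_⟩
    intro x hx
    have : x ∈ B n := Set.mem_iInter.mp hx n
    obtain ⟨i, hi, hxi⟩ := Set.mem_iUnion₂.mp this
    refine Set.mem_iUnion₂.mpr ⟨e i, Set.mem_image_of_mem e hi, ?_⟩
    exact Metric.mem_ball.mpr (lt_of_le_of_lt (Metric.mem_closedBall.mp hxi) hn)
  · have hcompl : (⋂ n, B n)ᶜ = ⋃ n, (B n)ᶜ := by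
      simp [Set.compl_iInter]
    rw [hcompl]
    refine le_trans (measure_iUnion_le _) ?_
    have hBn : ∀ n, μ (B n)ᶜ ≤ δ n := by
      intro n
      rw [measure_compl (hBclosed n).measurableSet (measure_ne_top μ _), measure_univ]
      rcases le_total (δ n) 1 with h1 | h1
      · rw [tsub_le_iff_left]
        calc (1 : ℝ≥0∞) = 1 - δ n + δ n := (tsub_add_cancel_of_le h1).symm
          _ ≤ δ n + μ (B n) := by rw [add_comm (1 - δ n)]; exact add_le_add le_rfl (hm n).le
          _ ≤ μ (B n) + δ n := by rw [add_comm]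
      · exact le_trans tsub_le_self h1
    refine le_trans (ENNReal.tsum_le_tsum hBn) ?_
    have : ∑' n : ℕ, δ n = ε * (2⁻¹ * ∑' n : ℕ, (2⁻¹ : ℝ≥0∞) ^ n) := by
      rw [← ENNReal.tsum_mul_left, ← ENNReal.tsum_mul_left]
      refine tsum_congr fun n => ?_
      show ε * 2⁻¹ ^ (n + 1) = ε * (2⁻¹ * 2⁻¹ ^ n)
      rw [pow_succ']
    rw [this, ENNReal.tsum_geometric, ENNReal.one_sub_inv_two, inv_inv,
      ENNReal.inv_mul_cancel two_ne_zero ENNReal.ofNat_ne_top, mul_one]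

lemma closure_lip {γ : Type*} [MetricSpace γ] {F : Set (γ → ℝ)}
    (hF : ∀ f ∈ F, ∀ x y : γ, dist (f x) (f y) ≤ dist x y) :
    ∀ f ∈ closure F, ∀ x y : γ, dist (f x) (f y) ≤ dist x y := by
  have hcl : IsClosed {u : γ → ℝ | ∀ x y : γ, dist (u x) (u y) ≤ dist x y} := by
    have heq : {u : γ → ℝ | ∀ x y : γ, dist (u x) (u y) ≤ dist x y}
        = ⋂ x, ⋂ y, {u : γ → ℝ | dist (u x) (u y) ≤ dist x y} := by
      ext u; simp only [Set.mem_setOf_eq, Set.mem_iInter]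
    rw [heq]
    exact isClosed_iInter fun x => isClosed_iInter fun y =>
      isClosed_le ((continuous_apply x).dist (continuous_apply y)) continuous_const
  exact fun f hf => closure_minimal hF hcl hf

lemma GDS.lip (X : GDS) : ∀ f ∈ X.F, ∀ x y : X.carrier, dist (f x) (f y) ≤ dist x y := by
  intro f hf x y
  rw [Real.dist_eq]
  exact (X.dist_isLUB x y).1 ⟨f, hf, rfl⟩

lemma exists_approx (X : GDS) {Ω : Type*} [MeasurableSpace Ω] (π : Measure Ω)
    (p : Ω → X.carrier) (hp : Measurable p) (hmap : π.map p = X.μ)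
    {f : X.carrier → ℝ} (hf : f ∈ closure X.F) {η : ℝ≥0∞} (hη : η ≠ 0) :
    ∃ f' ∈ X.F, kyFan π (f ∘ p) (f' ∘ p) ≤ η := by
  set d : ℝ := (min η 1).toReal / 3 with hd
  have hmin_ne_top : min η 1 ≠ ⊤ := ne_top_of_le_ne_top one_ne_top (min_le_right _ _)
  have hmin_ne_zero : min η 1 ≠ 0 := by
    simp only [ne_eq, min_eq_iff, not_or]
    push_neg
    simp [hη]
  have hd0 : 0 < d := by
    have := ENNReal.toReal_pos hmin_ne_zero hmin_ne_top
    positivity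
  have h3d : ENNReal.ofReal (3 * d) ≤ η := by
    have : 3 * d = (min η 1).toReal := by rw [hd]; ring
    rw [this, ENNReal.ofReal_toReal hmin_ne_top]
    exact min_le_left _ _
  obtain ⟨K, hK, hKc⟩ := tight_aux X.μ (ε := ENNReal.ofReal d) (ENNReal.ofReal_pos.mpr hd0).ne'
  obtain ⟨t, htfin, htK⟩ := Metric.totallyBounded_iff.mp hK.totallyBounded d hd0
  have hVmem : (⋂ y ∈ t, (fun u : X.carrier → ℝ => u y) ⁻¹' Metric.ball (f y) d) ∈ 𝓝 f := by
    refine (Filter.biInter_mem htfin).mpr fun y _ => ?_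
    exact (continuous_apply y).continuousAt.preimage_mem_nhds
      (Metric.isOpen_ball.mem_nhds (Metric.mem_ball_self hd0))
  obtain ⟨f', hf'V, hf'F⟩ := mem_closure_iff_nhds.mp hf _ hVmem
  have hclose : ∀ y ∈ t, dist (f' y) (f y) < d := by
    intro y hy
    have := Set.mem_iInter₂.mp hf'V y hy
    exact Metric.mem_ball.mp this
  have hflip := closure_lip X.lip f hf
  have hf'lip := X.lip f' hf'F
  refine ⟨f', hf'F, ?_⟩
  refine le_trans (kyFan_le' π (t := ENNReal.ofReal (3 * d)) ?_) h3d
  have hsub : {ω | ENNReal.ofReal (3 * d) < edist ((f ∘ p) ω) ((f' ∘ p) ω)} ⊆ p ⁻¹' Kᶜ := by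
    intro ω hω
    simp only [Set.mem_setOf_eq] at hω
    by_contra hc
    simp only [Set.mem_preimage, Set.mem_compl_iff, not_not] at hc
    obtain ⟨y, hyt, hxy⟩ := Set.mem_iUnion₂.mp (htK hc)
    have hxy' : dist (p ω) y < d := Metric.mem_ball.mp hxy
    have hbound : dist (f (p ω)) (f' (p ω)) ≤ 3 * d := by
      calc dist (f (p ω)) (f' (p ω))
          ≤ dist (f (p ω)) (f y) + dist (f y) (f' y) + dist (f' y) (f' (p ω)) :=
            dist_triangle4 _ _ _ _
        _ ≤ dist (p ω) y + dist (f' y) (f y) + dist y (p ω) := by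
            refine add_le_add (add_le_add (hflip _ _) (dist_comm (f y) (f' y) ▸ le_rfl)) ?_
            exact hf'lip y (p ω)
        _ ≤ d + d + d := by
            refine add_le_add (add_le_add hxy'.le (hclose y hyt).le) ?_
            rw [dist_comm]; exact hxy'.le
        _ = 3 * d := by ring
    have : edist ((f ∘ p) ω) ((f' ∘ p) ω) ≤ ENNReal.ofReal (3 * d) := by
      rw [edist_dist]
      exact ENNReal.ofReal_le_ofReal hbound
    exact absurd hω (not_lt.mpr this)
  refine le_trans (measure_mono hsub) ?_
  have : π (p ⁻¹' Kᶜ) = X.μ Kᶜ := by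
    rw [← hmap, Measure.map_apply hp hK.isClosed.measurableSet.compl]
  rw [this]
  refine le_trans hKc (ENNReal.ofReal_le_ofReal (by linarith))

/-- For a coupling `π` there is a map `u : F̄_X → F̄_Y` with
`d_KF^π(f ∘ pr₁, u(f) ∘ pr₂) ≤ d_conc^π(X,Y)` for every `f ∈ F̄_X`. -/
theorem exists_map_kyFan_le_dConcCoupling (X Y : GDS)
    (π : Measure (X.carrier × Y.carrier)) (hπ : X.Coupling Y π) :
    ∃ u : (X.carrier → ℝ) → (Y.carrier → ℝ),
      (∀ f ∈ closure X.F, u f ∈ closure Y.F) ∧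
      ∀ f ∈ closure X.F,
        kyFan π (f ∘ Prod.fst) (u f ∘ Prod.snd) ≤ dConcCoupling X Y π := by
  classical
  obtain ⟨hprob, hfst, hsnd⟩ := hπ
  haveI := hprob
  obtain ⟨g₀, hg₀⟩ := Y.F_nonempty
  set D := dConcCoupling X Y π with hDdef
  suffices h : ∀ f ∈ closure X.F, ∃ g ∈ closure Y.F,
      kyFan π (f ∘ Prod.fst) (g ∘ Prod.snd) ≤ D by
    choose! u hu1 hu2 using h
    exact ⟨u, hu1, hu2⟩
  intro f hf
  rcases le_or_gt 1 D with hD1 | hD1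
  · exact ⟨g₀, subset_closure hg₀, (kyFan_le_one' π _ _).trans hD1⟩
  have hDtop : D ≠ ⊤ := (hD1.trans one_lt_top).ne
  have step2 : ∀ f' ∈ X.F, ∀ t : ℝ≥0∞, D < t →
      ∃ g ∈ Y.F, kyFan π (f' ∘ Prod.fst) (g ∘ Prod.snd) ≤ t := by
    intro f' hf' t ht
    have hinf : (⨅ b : ((· ∘ Prod.snd) '' Y.F),
        kyFan π (f' ∘ Prod.fst) b.1) ≤ D := by
      rw [hDdef, dConcCoupling, hausd]
      refine le_trans ?_ (le_max_left _ _)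
      exact le_iSup (fun a : ((· ∘ Prod.fst) '' X.F) =>
        ⨅ b : ((· ∘ Prod.snd) '' Y.F),
          kyFan π a.1 b.1)
        ⟨f' ∘ Prod.fst, ⟨f', hf', rfl⟩⟩
    obtain ⟨⟨b, hb⟩, hblt⟩ := iInf_lt_iff.mp (lt_of_le_of_lt hinf ht)
    obtain ⟨g, hg, rfl⟩ := hb
    exact ⟨g, hg, hblt.le⟩
  have hflip := closure_lip X.lip f hf
  have step3 : ∀ t : ℝ≥0∞, D < t →
      ∃ g ∈ Y.F, kyFan π (f ∘ Prod.fst) (g ∘ Prod.snd) ≤ t := by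
    intro t ht
    obtain ⟨r, hr0, hrt⟩ := ENNReal.lt_iff_exists_add_pos_lt.mp ht
    have hr2 : ((r : ℝ≥0∞) / 2) ≠ 0 := by
      simp [ENNReal.div_eq_zero_iff, hr0.ne']
    obtain ⟨f', hf'F, hf'⟩ := exists_approx X π Prod.fst measurable_fst hfst hf hr2
    obtain ⟨g, hgF, hgk⟩ := step2 f' hf'F (D + (r : ℝ≥0∞) / 2)
      (ENNReal.lt_add_right hDtop hr2)
    refine ⟨g, hgF, ?_⟩
    calc kyFan π (f ∘ Prod.fst) (g ∘ Prod.snd)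
        ≤ kyFan π (f ∘ Prod.fst) (f' ∘ Prod.fst) +
          kyFan π (f' ∘ Prod.fst) (g ∘ Prod.snd) := kyFan_triangle' π _ _ _
      _ ≤ (r : ℝ≥0∞) / 2 + (D + (r : ℝ≥0∞) / 2) := add_le_add hf' hgk
      _ = D + (r : ℝ≥0∞) := by
          rw [add_comm ((r : ℝ≥0∞) / 2), add_assoc, ENNReal.add_halves]
      _ ≤ t := hrt.le
  -- choose an intermediate level R with D < R < 1
  set R : ℝ≥0∞ := D + (1 - D) / 2 with hRdef
  have h1D : (1 : ℝ≥0∞) - D ≠ 0 := (tsub_pos_iff_lt.mpr hD1).ne'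
  have h1Dtop : (1 : ℝ≥0∞) - D ≠ ⊤ := ne_top_of_le_ne_top one_ne_top tsub_le_self
  have hDR : D < R := ENNReal.lt_add_right hDtop
    (by simp [ENNReal.div_eq_zero_iff, h1D])
  have hR1 : R < 1 := by
    calc R < D + (1 - D) := ENNReal.add_lt_add_left hDtop (ENNReal.half_lt_self h1D h1Dtop)
      _ = 1 := add_tsub_cancel_of_le hD1.le
  have hRtop : R ≠ ⊤ := (hR1.trans one_lt_top).ne
  -- the approximating sequence
  set t : ℕ → ℝ≥0∞ := fun n => min R (D + ((n : ℝ≥0∞) + 1)⁻¹) with htdef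
  have htD : ∀ n, D < t n := fun n => lt_min hDR
    (ENNReal.lt_add_right hDtop (ENNReal.inv_ne_zero.mpr (by
      exact_mod_cast ENNReal.add_ne_top.mpr ⟨ENNReal.natCast_ne_top n, one_ne_top⟩)))
  choose g hgF hgk using fun n => step3 (t n) (htD n)
  have hE : ∀ n, π {ω' : X.carrier × Y.carrier |
      t n < edist (f ω'.1) (g n ω'.2)} ≤ t n :=
    fun n => measure_lt_of_kyFan_le' π (hgk n)
  -- tightness of π on the product
  obtain ⟨K, hK, hKc⟩ := tight_aux π (ε := (1 - R) / 2)
    (by simp [ENNReal.div_eq_zero_iff, (tsub_pos_iff_lt.mpr hR1).ne'])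
  -- in each "good" set there is a point of K
  have hpt : ∀ n, ∃ ω' : X.carrier × Y.carrier,
      ω' ∈ K ∧ edist (f ω'.1) (g n ω'.2) ≤ t n := by
    intro n
    by_contra hc
    push_neg at hc
    have hsub : (Set.univ : Set (X.carrier × Y.carrier)) ⊆
        Kᶜ ∪ {ω' | t n < edist (f ω'.1) (g n ω'.2)} := by
      intro ω' _
      by_cases hωK : ω' ∈ K
      · exact Or.inr (hc ω' hωK)
      · exact Or.inl hωK
    have hlt : (1 : ℝ≥0∞) < 1 := by
      calc (1 : ℝ≥0∞) = π Set.univ := measure_univ.symm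
        _ ≤ π (Kᶜ ∪ {ω' | t n < edist (f ω'.1) (g n ω'.2)}) := measure_mono hsub
        _ ≤ π Kᶜ + π {ω' | t n < edist (f ω'.1) (g n ω'.2)} := measure_union_le _ _
        _ ≤ (1 - R) / 2 + t n := add_le_add hKc (hE n)
        _ ≤ (1 - R) / 2 + R := add_le_add le_rfl (min_le_left _ _)
        _ < (1 - R) + R := ENNReal.add_lt_add_right hRtop
            (ENNReal.half_lt_self (tsub_pos_iff_lt.mpr hR1).ne'
              (ne_top_of_le_ne_top one_ne_top tsub_le_self))
        _ = 1 := tsub_add_cancel_of_le hR1.le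
    exact absurd hlt (lt_irrefl _)
  choose ω hωK hωe using hpt
  -- uniform bounds for the g n
  have hfcont : Continuous f :=
    (LipschitzWith.of_dist_le_mul (K := 1) (fun x y => by
      rw [NNReal.coe_one, one_mul]; exact hflip x y)).continuous
  obtain ⟨M, hM⟩ := (hK.image continuous_fst).exists_bound_of_continuousOn
    (hfcont.continuousOn (s := Prod.fst '' K))
  obtain ⟨C, hC⟩ := Metric.isBounded_iff.mp (hK.image continuous_snd).isBounded
  set y0 : Y.carrier := (ω 0).2 with hy0def
  have hy0K2 : y0 ∈ Prod.snd '' K := Set.mem_image_of_mem _ (hωK 0)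
  have hglip : ∀ n, ∀ x y : Y.carrier, dist (g n x) (g n y) ≤ dist x y :=
    fun n => Y.lip _ (hgF n)
  have htle1 : ∀ n, t n ≤ 1 := fun n => le_trans (min_le_left _ _) hR1.le
  have hgb : ∀ n (y : Y.carrier), |g n y| ≤ M + 1 + C + dist y y0 := by
    intro n y
    have hd1 : dist (f (ω n).1) (g n (ω n).2) ≤ 1 := by
      have h1 : edist (f (ω n).1) (g n (ω n).2) ≤ 1 := le_trans (hωe n) (htle1 n)
      rw [edist_dist] at h1
      exact (ENNReal.ofReal_le_one.mp h1)
    have hMn : |f (ω n).1| ≤ M := by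
      have := hM ((ω n).1) (Set.mem_image_of_mem _ (hωK n))
      simpa [Real.norm_eq_abs] using this
    have hgn2 : |g n (ω n).2| ≤ M + 1 := by
      have h4 : |f (ω n).1 - g n (ω n).2| ≤ 1 := by rw [← Real.dist_eq]; exact hd1
      have h5 := abs_sub_abs_le_abs_sub (g n (ω n).2) (f (ω n).1)
      rw [abs_sub_comm] at h5
      linarith
    have hdist2 : dist y (ω n).2 ≤ dist y y0 + C := by
      calc dist y (ω n).2 ≤ dist y y0 + dist y0 (ω n).2 := dist_triangle _ _ _
        _ ≤ dist y y0 + C := add_le_add le_rfl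
            (hC hy0K2 (Set.mem_image_of_mem _ (hωK n)))
    calc |g n y| ≤ |g n (ω n).2| + |g n y - g n (ω n).2| := by
          have := abs_sub_abs_le_abs_sub (g n y) (g n (ω n).2)
          linarith [abs_sub_abs_le_abs_sub (g n y) (g n (ω n).2), abs_nonneg (g n y - g n (ω n).2)]
      _ ≤ (M + 1) + dist y (ω n).2 := add_le_add hgn2 (by
          rw [← Real.dist_eq]; exact hglip n y (ω n).2)
      _ ≤ (M + 1) + (dist y y0 + C) := add_le_add le_rfl hdist2
      _ = M + 1 + C + dist y y0 := by ring
  -- extract a pointwise convergent subsequence on a countable dense set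
  haveI : Nonempty Y.carrier := ⟨y0⟩
  obtain ⟨e, he⟩ := TopologicalSpace.exists_dense_seq Y.carrier
  set B : ℕ → ℝ := fun k => M + 1 + C + dist (e k) y0 with hBdef
  have hcpt : IsCompact (Set.univ.pi fun k : ℕ => Set.Icc (-(B k)) (B k)) :=
    isCompact_univ_pi fun k => isCompact_Icc
  have hmemB : ∀ n, (fun k => g n (e k)) ∈ Set.univ.pi fun k : ℕ => Set.Icc (-(B k)) (B k) :=
    fun n k _ => abs_le.mp (hgb n (e k))
  obtain ⟨a, -, φ, hφ, hconv⟩ := hcpt.isSeqCompact hmemB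
  have hcoord : ∀ k, Tendsto (fun n => g (φ n) (e k)) atTop (𝓝 (a k)) :=
    fun k => tendsto_pi_nhds.mp hconv k
  -- the pointwise limit everywhere
  have hCauchy : ∀ y : Y.carrier, ∃ l : ℝ, Tendsto (fun n => g (φ n) y) atTop (𝓝 l) := by
    intro y
    apply cauchySeq_tendsto_of_complete
    rw [Metric.cauchySeq_iff]
    intro ε hε
    obtain ⟨k, hk⟩ := he.exists_dist_lt y (show (0:ℝ) < ε / 3 by linarith)
    obtain ⟨N, hN⟩ := Metric.cauchySeq_iff.mp (hcoord k).cauchySeq (ε / 3) (by linarith)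
    refine ⟨N, fun p hp q hq => ?_⟩
    calc dist (g (φ p) y) (g (φ q) y)
        ≤ dist (g (φ p) y) (g (φ p) (e k)) + dist (g (φ p) (e k)) (g (φ q) (e k)) +
          dist (g (φ q) (e k)) (g (φ q) y) := dist_triangle4 _ _ _ _
      _ < ε / 3 + ε / 3 + ε / 3 := by
          have h1 : dist (g (φ p) y) (g (φ p) (e k)) < ε / 3 :=
            lt_of_le_of_lt (hglip (φ p) y (e k)) hk
          have h2 : dist (g (φ p) (e k)) (g (φ q) (e k)) < ε / 3 := hN p hp q hq
          have h3 : dist (g (φ q) (e k)) (g (φ q) y) < ε / 3 := by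
            refine lt_of_le_of_lt (hglip (φ q) (e k) y) ?_
            rw [dist_comm]; exact hk
          linarith
      _ = ε := by ring
  choose gl hgl using hCauchy
  have hglF : gl ∈ closure Y.F :=
    mem_closure_of_tendsto (tendsto_pi_nhds.mpr hgl)
      (Eventually.of_forall fun n => hgF (φ n))
  refine ⟨gl, hglF, ?_⟩
  -- the final Ky Fan bound
  refine ENNReal.le_of_forall_pos_le_add fun ε hε _ => ?_
  have hεcast : ((ε : ℝ≥0∞) / 2) ≠ 0 := by
    simp [ENNReal.div_eq_zero_iff, hε.ne']
  refine kyFan_le' π ?_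
  set W : ℕ → Set (X.carrier × Y.carrier) := fun N =>
    ⋂ n ∈ Set.Ici N, {ω' | t (φ n) < edist (f ω'.1) (g (φ n) ω'.2)} with hWdef
  have hsubset : {ω' : X.carrier × Y.carrier |
      D + (ε : ℝ≥0∞) < edist ((f ∘ Prod.fst) ω') ((gl ∘ Prod.snd) ω')} ⊆ ⋃ N, W N := by
    intro ω' hω'
    simp only [Set.mem_setOf_eq] at hω'
    have hconv' : Tendsto (fun n => edist (f ω'.1) (g (φ n) ω'.2)) atTop
        (𝓝 (edist (f ω'.1) (gl ω'.2))) := tendsto_const_nhds.edist (hgl ω'.2)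
    have hgt : D + (ε : ℝ≥0∞) / 2 < edist (f ω'.1) (gl ω'.2) := by
      refine lt_of_lt_of_le ?_ (le_of_lt hω')
      exact ENNReal.add_lt_add_left hDtop
        (ENNReal.half_lt_self (by exact_mod_cast hε.ne') ENNReal.coe_ne_top)
    have hev1 : ∀ᶠ n in atTop, D + (ε : ℝ≥0∞) / 2 < edist (f ω'.1) (g (φ n) ω'.2) :=
      hconv'.eventually_const_lt hgt
    obtain ⟨N₀, hN₀⟩ := ENNReal.exists_inv_nat_lt hεcast
    have hev2 : ∀ᶠ n in atTop, t (φ n) ≤ D + (ε : ℝ≥0∞) / 2 := by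
      filter_upwards [eventually_ge_atTop N₀] with n hn
      refine le_trans (min_le_right _ _) (add_le_add le_rfl ?_)
      calc ((φ n : ℝ≥0∞) + 1)⁻¹ ≤ ((N₀ : ℝ≥0∞))⁻¹ := by
            refine ENNReal.inv_le_inv.mpr ?_
            have : (N₀ : ℝ≥0∞) ≤ (φ n : ℝ≥0∞) := by
              exact_mod_cast le_trans hn (hφ.le_apply)
            exact le_trans this le_self_add
        _ ≤ (ε : ℝ≥0∞) / 2 := hN₀.le
    obtain ⟨N, hN⟩ := eventually_atTop.mp (hev1.and hev2)
    refine Set.mem_iUnion.mpr ⟨N, Set.mem_iInter₂.mpr fun n hn => ?_⟩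
    exact lt_of_le_of_lt (hN n hn).2 (hN n hn).1
  refine le_trans (measure_mono hsubset) ?_
  have hWmono : Monotone W := by
    intro N N' hNN' ω' hω'
    refine Set.mem_iInter₂.mpr fun n hn => ?_
    exact Set.mem_iInter₂.mp hω' n (le_trans hNN' hn)
  rw [Directed.measure_iUnion hWmono.directed_le]
  refine le_trans (iSup_le fun N => ?_) le_self_add
  -- π (W N) ≤ D
  refine ENNReal.le_of_forall_pos_le_add fun ε' hε' _ => ?_
  obtain ⟨m, hm⟩ := ENNReal.exists_inv_nat_lt
    (show ((ε' : ℝ≥0∞)) ≠ 0 by exact_mod_cast hε'.ne')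
  set n : ℕ := max N m with hndef
  calc π (W N) ≤ π {ω' | t (φ n) < edist (f ω'.1) (g (φ n) ω'.2)} :=
        measure_mono (Set.biInter_subset_of_mem (show n ∈ Set.Ici N from Set.mem_Ici.mpr (le_max_left _ _)))
    _ ≤ t (φ n) := hE (φ n)
    _ ≤ D + ((φ n : ℝ≥0∞) + 1)⁻¹ := min_le_right _ _
    _ ≤ D + ((m : ℝ≥0∞))⁻¹ := by
        refine add_le_add le_rfl (ENNReal.inv_le_inv.mpr ?_)
        have : (m : ℝ≥0∞) ≤ (φ n : ℝ≥0∞) := by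
          exact_mod_cast le_trans (le_max_right N m) (hφ.le_apply)
        exact le_trans this le_self_add
    _ ≤ D + (ε' : ℝ≥0∞) := add_le_add le_rfl hm.le
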